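/- Let A be a finite-dimensional complete left-symmetric algebra over ℂ and let H be a Cartan subalgebra of the commutator Lie algebra of A for which the root decomposition is canonical (i.e., ⋂_{x∈H} maxGenEigenspace(L(x), χ(x)) = ⋂_{x∈H} maxGenEigenspace(ad(x), χ(x)) for all χ : H → ℂ). Then for every x ∈ H the operators L(x) and ad(x) have equal semisimple parts: there exists a semisimple (diagonalizable) linear endomorphism S of A commuting with L(x) and with ad(x) such that L(x) − S and ad(x) − S are both nilpotent. -/

import Mathlib

open Polynomial LieModule

/-- Type synonym for the left-regular representation of a left-symmetric algebra. -/
def LeftRegularLSA (A : Type*) : Type _ := A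

private lemma commute_aeval_aeval' {R M : Type*} [CommRing R] [AddCommGroup M] [Module R M]
    (f : Module.End R M) (p q : R[X]) :
    Commute (aeval f p) (aeval f q) := by
  have h1 : aeval f p * aeval f q = aeval f (p * q) := (map_mul _ _ _).symm
  have h2 : aeval f q * aeval f p = aeval f (q * p) := (map_mul _ _ _).symm
  rw [Commute, SemiconjBy, h1, h2, mul_comm]

private lemma aeval_mem_of_mem' {R M : Type*} [CommRing R] [AddCommGroup M] [Module R M]
    (f : Module.End R M) {V : Submodule R M} (hV : ∀ v ∈ V, f v ∈ V) (p : R[X]) :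
    ∀ v ∈ V, aeval f p v ∈ V := by
  induction p using Polynomial.induction_on' with
  | add p q hp hq =>
      intro v hv
      rw [map_add, LinearMap.add_apply]
      exact V.add_mem (hp v hv) (hq v hv)
  | monomial k a =>
      intro v hv
      rw [Polynomial.aeval_monomial]
      have : (algebraMap R (Module.End R M) a * f ^ k) v = a • ((f ^ k) v) := by
        simp [Module.End.mul_apply, Module.algebraMap_end_apply]
      rw [this]
      exact V.smul_mem a (Module.End.pow_apply_mem_of_forall_mem k hV v hv)

/-- If `H` is a Cartan subalgebra of a finite-dimensional complete left-symmetric algebra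
over `ℂ` for which the root decomposition is canonical, then for every `x ∈ H` the
operators `L(x)` and `ad(x)` have equal semisimple parts. -/
theorem leftSymmetric_canonical_equal_semisimple_parts (A : Type*)
    [LieRing A] [LieAlgebra ℂ A] [FiniteDimensional ℂ A]
    (mul : A →ₗ[ℂ] A →ₗ[ℂ] A)
    (hbr : ∀ x y : A, ⁅x, y⁆ = mul x y - mul y x)
    (hls : ∀ x y z : A,
      mul x (mul y z) - mul (mul x y) z = mul y (mul x z) - mul (mul y x) z)
    (hcomplete : ∀ x : A, IsNilpotent (mul.flip x))
    (H : LieSubalgebra ℂ A) (hH : H.IsCartanSubalgebra)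
    (hcanon : ∀ χ : H → ℂ,
      (⨅ x : H, Module.End.maxGenEigenspace (mul (x : A)) (χ x)) =
        ⨅ x : H, Module.End.maxGenEigenspace (mul (x : A) - mul.flip (x : A)) (χ x)) :
    ∀ x ∈ H, ∃ S : Module.End ℂ A, S.IsSemisimple ∧
      Commute S (mul x) ∧ Commute S (mul x - mul.flip x) ∧
      IsNilpotent (mul x - S) ∧ IsNilpotent ((mul x - mul.flip x) - S) := by
  classical
  haveI := hH.nilpotent
  intro x hx
  set d := Module.finrank ℂ A with hd
  set xH : H := ⟨x, hx⟩ with hxH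
  set D : Module.End ℂ A := mul x - mul.flip x with hDdef
  -- the adjoint action of `H` on `A` agrees with `mul y - mul.flip y`
  have htoEnd : ∀ y : H, toEnd ℂ H A y = mul (y : A) - mul.flip (y : A) := by
    intro y
    ext z
    rw [toEnd_apply_apply, LieSubalgebra.coe_bracket_of_module, hbr]
    simp [LinearMap.sub_apply, LinearMap.flip_apply]
  -- weight spaces of the adjoint action
  set V : (H → ℂ) → Submodule ℂ A :=
    fun χ => ⨅ y : H, Module.End.maxGenEigenspace (mul (y : A) - mul.flip (y : A)) (χ y) with hVdef
  have hWD : ∀ χ : H → ℂ,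
      ((genWeightSpace A χ : LieSubmodule ℂ H A) : Submodule ℂ A) = V χ := by
    intro χ
    rw [genWeightSpace, LieSubmodule.iInf_toSubmodule]
    exact iInf_congr fun y => by rw [← htoEnd y]; rfl
  -- left-regular module structure on the type synonym
  letI : AddCommGroup (LeftRegularLSA A) := inferInstanceAs (AddCommGroup A)
  letI : Module ℂ (LeftRegularLSA A) := inferInstanceAs (Module ℂ A)
  letI : LieRingModule H (LeftRegularLSA A) :=
    { bracket := fun y a => mul (y : A) a
      add_lie := fun y z (a : A) => by
        show mul ((y : A) + (z : A)) a = mul (y : A) a + mul (z : A) a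
        rw [map_add, LinearMap.add_apply]
      lie_add := fun y a b => map_add _ _ _
      leibniz_lie := fun y z (a : A) => by
        show mul (y : A) (mul (z : A) a)
          = mul ((⁅y, z⁆ : H) : A) a + mul (z : A) (mul (y : A) a)
        have hcoe : ((⁅y, z⁆ : H) : A) = ⁅(y : A), (z : A)⁆ := rfl
        rw [hcoe, hbr, map_sub, LinearMap.sub_apply]
        have h := hls (y : A) (z : A) a
        rw [sub_eq_iff_eq_add] at h
        rw [h]
        abel }
  letI : LieModule ℂ H (LeftRegularLSA A) :=
    { smul_lie := fun c y (a : A) => by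
        show mul ((c • y : H) : A) a = c • mul (y : A) a
        rw [show ((c • y : H) : A) = c • (y : A) from rfl, map_smul, LinearMap.smul_apply]
      lie_smul := fun c y a => map_smul _ _ _ }
  have htoEndL : ∀ y : H,
      (toEnd ℂ H (LeftRegularLSA A) y : Module.End ℂ (LeftRegularLSA A))
        = (mul (y : A) : Module.End ℂ A) := fun y => rfl
  have hWL : ∀ χ : H → ℂ,
      ((genWeightSpace (LeftRegularLSA A) χ : LieSubmodule ℂ H (LeftRegularLSA A)) :
        Submodule ℂ (LeftRegularLSA A))
        = ⨅ y : H, Module.End.maxGenEigenspace (mul (y : A)) (χ y) := by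
    intro χ
    rw [genWeightSpace, LieSubmodule.iInf_toSubmodule]
    exact iInf_congr fun y => by rw [← htoEndL y]; rfl
  -- invariance of the joint weight spaces
  have hDmem : ∀ (χ : H → ℂ) v, v ∈ V χ → D v ∈ V χ := by
    intro χ v hv
    rw [← hWD χ] at hv ⊢
    have := (genWeightSpace A χ).lie_mem (x := xH) hv
    have hDv : D v = ⁅xH, v⁆ := by
      rw [LieSubalgebra.coe_bracket_of_module, hbr]
      simp [hDdef, LinearMap.sub_apply, LinearMap.flip_apply]
      rfl
    rw [hDv]
    exact this
  have hmemL : ∀ (χ : H → ℂ) (v : A), v ∈ V χ ↔ v ∈ genWeightSpace (LeftRegularLSA A) χ := by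
    intro χ v
    constructor
    · intro hv
      have hv2 : v ∈ ⨅ y : H, Module.End.maxGenEigenspace (mul (y : A)) (χ y) := by
        rw [hcanon χ]; exact hv
      refine (LieModule.mem_genWeightSpace (LeftRegularLSA A) χ v).mpr fun y => ?_
      have h3 := (Submodule.mem_iInf _).mp hv2 y
      obtain ⟨k, hk⟩ := (Module.End.mem_maxGenEigenspace _ _ _).mp h3
      exact ⟨k, hk⟩
    · intro hv
      have hv2 : v ∈ ⨅ y : H, Module.End.maxGenEigenspace (mul (y : A)) (χ y) := by
        have hv' := (LieModule.mem_genWeightSpace (LeftRegularLSA A) χ v).mp hv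
        refine (Submodule.mem_iInf _).mpr fun y => ?_
        refine (Module.End.mem_maxGenEigenspace _ _ _).mpr ?_
        obtain ⟨k, hk⟩ := hv' y
        exact ⟨k, hk⟩
      rw [hcanon χ] at hv2
      exact hv2
  have hLmem : ∀ (χ : H → ℂ) v, v ∈ V χ → mul x v ∈ V χ := by
    intro χ v hv
    have h2 := (genWeightSpace (LeftRegularLSA A) χ).lie_mem (x := xH) ((hmemL χ v).mp hv)
    exact (hmemL χ (mul x v)).mpr h2
  have hVleD : ∀ χ : H → ℂ, V χ ≤ Module.End.maxGenEigenspace D (χ xH) := fun χ => iInf_le _ xH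
  have hVleL : ∀ χ : H → ℂ, V χ ≤ Module.End.maxGenEigenspace (mul x) (χ xH) := by
    intro χ v hv
    have hv2 : v ∈ ⨅ y : H, Module.End.maxGenEigenspace (mul (y : A)) (χ y) := by
      rw [hcanon χ]; exact hv
    exact (Submodule.mem_iInf _).mp hv2 xH
  -- uniform nilpotency bound from finite-dimensionality
  have hmaxnil : ∀ (f : Module.End ℂ A) (c : ℂ) v, v ∈ Module.End.maxGenEigenspace f c →
      ((f - c • 1) ^ d) v = 0 := by
    intro f c v hv
    have := Module.End.genEigenspace_le_genEigenspace_finrank f c ⊤ hv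
    exact Module.End.mem_genEigenspace_nat.mp this
  -- Jordan-Chevalley decomposition of D
  obtain ⟨n, hn_mem, s, hs_mem, hnil, hss, hds⟩ :=
    Module.End.exists_isNilpotent_isSemisimple (f := D)
  rw [Algebra.adjoin_singleton_eq_range_aeval] at hn_mem hs_mem
  obtain ⟨pn, hpn⟩ := (AlgHom.mem_range _).mp hn_mem
  obtain ⟨ps, hps⟩ := (AlgHom.mem_range _).mp hs_mem
  -- key: on each joint weight space, s acts as the scalar χ xH
  have hkey : ∀ (χ : H → ℂ) v, v ∈ V χ → s v = χ xH • v := by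
    intro χ
    set c : ℂ := χ xH with hc
    have hsmem : ∀ v ∈ V χ, s v ∈ V χ := by
      intro v hv
      rw [← hps]
      exact aeval_mem_of_mem' D (hDmem χ) ps v hv
    have hnmem : ∀ v ∈ V χ, n v ∈ V χ := by
      intro v hv
      rw [← hpn]
      exact aeval_mem_of_mem' D (hDmem χ) pn v hv
    have hDc_mem : ∀ v ∈ V χ, (D - c • 1) v ∈ V χ := by
      intro v hv
      rw [LinearMap.sub_apply]
      exact (V χ).sub_mem (hDmem χ v hv)
        (by simpa using (V χ).smul_mem c hv)
    have hsc_mem : ∀ v ∈ V χ, (s - c • 1) v ∈ V χ := by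
      intro v hv
      rw [LinearMap.sub_apply]
      exact (V χ).sub_mem (hsmem v hv) (by simpa using (V χ).smul_mem c hv)
    have hDcnil : ∀ v ∈ V χ, ((D - c • 1) ^ d) v = 0 :=
      fun v hv => hmaxnil D c v (hVleD χ hv)
    have hnil_rest : IsNilpotent ((D - c • (1 : Module.End ℂ A)).restrict hDc_mem) := by
      refine ⟨d, ?_⟩
      rw [Module.End.pow_restrict]
      ext v
      simp only [LinearMap.restrict_coe_apply, LinearMap.zero_apply, ZeroMemClass.coe_zero]
      exact hDcnil v.1 v.2
    have hn_rest : IsNilpotent (n.restrict hnmem) := by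
      obtain ⟨k, hk⟩ := hnil
      refine ⟨k, ?_⟩
      rw [Module.End.pow_restrict]
      ext v
      simp only [LinearMap.restrict_coe_apply, LinearMap.zero_apply, ZeroMemClass.coe_zero]
      rw [hk, LinearMap.zero_apply]
    have hDc_poly : D - c • (1 : Module.End ℂ A) = aeval D (X - C c) := by
      rw [map_sub, aeval_X, aeval_C, Algebra.algebraMap_eq_smul_one]
    have hcDn : Commute (D - c • (1 : Module.End ℂ A)) n := by
      rw [hDc_poly, ← hpn]
      exact commute_aeval_aeval' D (X - C c) pn
    have hcomm_rest : Commute ((D - c • (1 : Module.End ℂ A)).restrict hDc_mem)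
        (n.restrict hnmem) := LinearMap.restrict_commute hcDn _ _
    have heq : (s - c • (1 : Module.End ℂ A)).restrict hsc_mem
        = (D - c • (1 : Module.End ℂ A)).restrict hDc_mem - n.restrict hnmem := by
      have hsd : s - c • (1 : Module.End ℂ A)
          = (D - c • (1 : Module.End ℂ A)) - n := by rw [hds]; abel
      rw [LinearMap.restrict_sub hDc_mem hnmem]
      ext v
      simp only [LinearMap.restrict_coe_apply, hsd, LinearMap.sub_apply]
    have hscnil : IsNilpotent ((s - c • (1 : Module.End ℂ A)).restrict hsc_mem) := by
      rw [heq]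
      exact hcomm_rest.isNilpotent_sub hnil_rest hn_rest
    obtain ⟨k, hk⟩ := hscnil
    intro v hv
    have hpt : ((s - c • (1 : Module.End ℂ A)) ^ (k + 1)) v = 0 := by
      have h1 : (((s - c • (1 : Module.End ℂ A)).restrict hsc_mem) ^ k) ⟨v, hv⟩ = 0 := by
        rw [hk]; rfl
      rw [Module.End.pow_restrict] at h1
      have h2 := congrArg Subtype.val h1
      rw [LinearMap.restrict_coe_apply] at h2
      exact Module.End.pow_map_zero_of_le (Nat.le_succ k) h2
    -- minimal polynomial argument
    have hq : Squarefree (minpoly ℂ s) := hss.minpoly_squarefree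
    set g : ℂ[X] := (X - C c) ^ (k + 1) with hg
    have hsX : aeval s (X - C c) = s - c • 1 := by
      rw [map_sub, aeval_X, aeval_C, Algebra.algebraMap_eq_smul_one]
    have hgv : aeval s g v = 0 := by
      rw [hg, map_pow, hsX]
      exact hpt
    set e : ℂ[X] := EuclideanDomain.gcd (minpoly ℂ s) g with he
    have hev : (aeval s e) v = 0 := by
      have h3 : e = minpoly ℂ s * EuclideanDomain.gcdA (minpoly ℂ s) g
          + g * EuclideanDomain.gcdB (minpoly ℂ s) g :=
        EuclideanDomain.gcd_eq_gcd_ab (minpoly ℂ s) g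
      rw [h3, mul_comm g, map_add, map_mul, map_mul, minpoly.aeval, zero_mul, zero_add,
        Module.End.mul_apply, hgv, map_zero]
    have hesf : Squarefree e :=
      hq.squarefree_of_dvd (EuclideanDomain.gcd_dvd_left (minpoly ℂ s) g)
    have hedvd : e ∣ (X - C c) :=
      (hesf.dvd_pow_iff_dvd (Nat.succ_ne_zero k)).mp
        (EuclideanDomain.gcd_dvd_right (minpoly ℂ s) g)
    obtain ⟨r, hr⟩ := hedvd
    have hz : (s - c • (1 : Module.End ℂ A)) v = 0 := by
      rw [← hsX, hr, mul_comm e r, map_mul, Module.End.mul_apply, hev, map_zero]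
    have : s v - c • v = 0 := by
      simpa [LinearMap.sub_apply, LinearMap.smul_apply, Module.End.one_apply] using hz
    exact sub_eq_zero.mp this
  -- weight space decomposition of A
  have htop : ⨆ χ : H → ℂ, V χ = ⊤ := by
    have h1 := iSup_genWeightSpace_eq_top ℂ H A
    have h2 : ((⨆ χ : H → ℂ, genWeightSpace A χ : LieSubmodule ℂ H A) : Submodule ℂ A)
        = ⊤ := by rw [h1]; rfl
    rw [LieSubmodule.iSup_toSubmodule] at h2
    calc ⨆ χ : H → ℂ, V χ
        = ⨆ χ : H → ℂ, ((genWeightSpace A χ : LieSubmodule ℂ H A) : Submodule ℂ A) :=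
          iSup_congr fun χ => (hWD χ).symm
      _ = ⊤ := h2
  refine ⟨s, hss, ?_, ?_, ?_, ?_⟩
  · -- Commute s (mul x)
    have hp : ∀ v : A, s (mul x v) = mul x (s v) := by
      intro v
      have hv : v ∈ ⨆ χ : H → ℂ, V χ := htop ▸ Submodule.mem_top
      refine Submodule.iSup_induction (motive := fun v => s (mul x v) = mul x (s v)) V hv ?_ ?_ ?_
      · intro χ v hvχ
        have h1 : mul x v ∈ V χ := hLmem χ v hvχ
        rw [hkey χ v hvχ, hkey χ _ h1, map_smul]
      · simp
      · intro a b ha hb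
        simp only [map_add, ha, hb]
    exact LinearMap.ext fun v => by
      simpa only [Module.End.mul_apply] using hp v
  · -- Commute s D
    have := commute_aeval_aeval' D ps X
    rwa [hps, aeval_X] at this
  · -- IsNilpotent (mul x - s)
    refine ⟨d, ?_⟩
    ext v
    rw [LinearMap.zero_apply]
    have hv : v ∈ ⨆ χ : H → ℂ, V χ := htop ▸ Submodule.mem_top
    refine Submodule.iSup_induction (motive := fun v => ((mul x - s) ^ d) v = 0) V hv ?_ ?_ ?_
    · intro χ v hvχ
      set c : ℂ := χ xH with hc
      have hstep : ∀ (j : ℕ) w, w ∈ V χ →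
          ((mul x - s) ^ j) w = ((mul (x : A) - c • 1) ^ j) w := by
        intro j
        induction j with
        | zero => intro w hw; rfl
        | succ j ih =>
            intro w hw
            have hw1 : (mul (x : A) - c • (1 : Module.End ℂ A)) w ∈ V χ := by
              rw [LinearMap.sub_apply]
              exact (V χ).sub_mem (hLmem χ w hw) (by simpa using (V χ).smul_mem c hw)
            have hww : (mul x - s) w = (mul (x : A) - c • (1 : Module.End ℂ A)) w := by
              simp only [LinearMap.sub_apply, LinearMap.smul_apply, Module.End.one_apply]
              rw [hkey χ w hw]
            rw [pow_succ, pow_succ, Module.End.mul_apply, Module.End.mul_apply, hww]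
            exact ih _ hw1
      rw [hstep d v hvχ]
      exact hmaxnil (mul x) c v (hVleL χ hvχ)
    · simp
    · intro a b ha hb
      rw [map_add, ha, hb, add_zero]
  · -- IsNilpotent (D - s)
    have hDs : D - s = n := by rw [hds]; abel
    show _root_.IsNilpotent (D - s)
    rw [hDs]
    exact hnil
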